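/- Let β be a density matrix on S⊗R₁ and γ a density matrix on S⊗R₂, viewed as prior beliefs about system S. Then β and γ are equivalent beliefs (i.e., they induce the same retrodiction map for all channels) if and only if for every complex matrix F on S one has Tr_{R₁}[√β (F⊗1_{R₁}) √β] = Tr_{R₂}[√γ (F⊗1_{R₂}) √γ]. -/

import Mathlib

open Matrix
open scoped Kronecker ComplexOrder


/-- The PSD square root, as `Matrix.PosSemidef.sqrt` was defined in Mathlib of December 2024. -/
noncomputable def Matrix.PosSemidef.sqrt {n 𝕜 : Type*} [Fintype n] [RCLike 𝕜] [DecidableEq n]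
    {A : Matrix n n 𝕜} (hA : A.PosSemidef) : Matrix n n 𝕜 :=
  hA.1.eigenvectorUnitary.1 * diagonal ((↑) ∘ (√·) ∘ hA.1.eigenvalues) *
    (star hA.1.eigenvectorUnitary : Matrix n n 𝕜)

open Classical in
/-- The positive semidefinite square root of a matrix (zero if not PSD). -/
noncomputable def msqrt {n : Type*} [Fintype n] [DecidableEq n] (A : Matrix n n ℂ) :
    Matrix n n ℂ :=
  if h : A.PosSemidef then h.sqrt else 0

/-- `A^{-1/2}`: the (nonsingular) inverse of the PSD square root. -/
noncomputable def invsqrt {n : Type*} [Fintype n] [DecidableEq n] (A : Matrix n n ℂ) :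
    Matrix n n ℂ :=
  (msqrt A)⁻¹

/-- Partial trace over the second factor `R`. -/
noncomputable def ptraceR {S R : Type*} [Fintype R] (M : Matrix (S × R) (S × R) ℂ) : Matrix S S ℂ :=
  Matrix.of fun s s' => ∑ r, M (s, r) (s', r)

/-- A density matrix: positive semidefinite with unit trace. -/
def IsDensity {n : Type*} [Fintype n] (A : Matrix n n ℂ) : Prop :=
  A.PosSemidef ∧ A.trace = 1

/-- The Choi matrix of a linear map between matrix algebras. -/
def choi {S T : Type*} [Fintype S] [DecidableEq S]
    (E : Matrix S S ℂ →ₗ[ℂ] Matrix T T ℂ) : Matrix (S × T) (S × T) ℂ :=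
  Matrix.of fun p q => E (Matrix.single p.1 q.1 1) p.2 q.2

/-- Completely positive trace-preserving map. -/
def IsCPTP {S T : Type*} [Fintype S] [DecidableEq S] [Fintype T]
    (E : Matrix S S ℂ →ₗ[ℂ] Matrix T T ℂ) : Prop :=
  (∀ X, (E X).trace = X.trace) ∧ (choi E).PosSemidef

/-- The Hilbert-Schmidt adjoint `E†`, satisfying `Tr[E(X)† Y] = Tr[X† E†(Y)]`. -/
noncomputable def adjMap {S T : Type*} [Fintype S] [DecidableEq S] [Fintype T]
    (E : Matrix S S ℂ →ₗ[ℂ] Matrix T T ℂ) (Y : Matrix T T ℂ) : Matrix S S ℂ :=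
  Matrix.of fun i j => ((E (Matrix.single i j 1))ᴴ * Y).trace

/-- The original Petz map `R^{E,βS}(σ) = √βS E†(E(βS)^{-1/2} σ E(βS)^{-1/2}) √βS`. -/
noncomputable def petz {S T : Type*} [Fintype S] [DecidableEq S] [Fintype T] [DecidableEq T]
    (E : Matrix S S ℂ →ₗ[ℂ] Matrix T T ℂ) (βS : Matrix S S ℂ) (σ : Matrix T T ℂ) :
    Matrix S S ℂ :=
  msqrt βS * adjMap E (invsqrt (E βS) * σ * invsqrt (E βS)) * msqrt βS

/-- The prior-extended Petz map `R^{E⊗Tr,β}`. -/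
noncomputable def petzExt {S R T : Type*} [Fintype S] [DecidableEq S]
    [Fintype R] [DecidableEq R] [Fintype T] [DecidableEq T]
    (E : Matrix S S ℂ →ₗ[ℂ] Matrix T T ℂ) (β : Matrix (S × R) (S × R) ℂ)
    (σ : Matrix T T ℂ) : Matrix (S × R) (S × R) ℂ :=
  msqrt β *
    (adjMap E (invsqrt (E (ptraceR β)) * σ * invsqrt (E (ptraceR β))) ⊗ₖ (1 : Matrix R R ℂ)) *
    msqrt β

/-- The retrodiction map `R_ext^{E,β} = Tr_R ∘ R^{E⊗Tr,β}`. -/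
noncomputable def retroExt {S R T : Type*} [Fintype S] [DecidableEq S]
    [Fintype R] [DecidableEq R] [Fintype T] [DecidableEq T]
    (E : Matrix S S ℂ →ₗ[ℂ] Matrix T T ℂ) (β : Matrix (S × R) (S × R) ℂ)
    (σ : Matrix T T ℂ) : Matrix S S ℂ :=
  ptraceR (petzExt E β σ)

/-- Two beliefs are equivalent if they induce the same retrodiction map for all channels. -/
def EquivBeliefs {S R₁ R₂ : Type*} [Fintype S] [DecidableEq S]
    [Fintype R₁] [DecidableEq R₁] [Fintype R₂] [DecidableEq R₂]
    (β : Matrix (S × R₁) (S × R₁) ℂ) (γ : Matrix (S × R₂) (S × R₂) ℂ) : Prop :=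
  ∀ (T : Type) (_ : Fintype T) (_ : DecidableEq T)
    (E : Matrix S S ℂ →ₗ[ℂ] Matrix T T ℂ),
    IsCPTP E → (E (ptraceR β)).PosDef → (E (ptraceR γ)).PosDef →
    ∀ σ : Matrix T T ℂ, retroExt E β σ = retroExt E γ σ



section AuxA

variable {n : Type*} [Fintype n] [DecidableEq n]

lemma Matrix.PosSemidef.posSemidef_sqrt {A : Matrix n n ℂ} (h : A.PosSemidef) :
    h.sqrt.PosSemidef := by
  unfold Matrix.PosSemidef.sqrt
  have hD : (diagonal ((↑) ∘ (√·) ∘ h.1.eigenvalues : n → ℂ)).PosSemidef :=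
    PosSemidef.diagonal (fun i => by
      simp only [Pi.zero_apply, Function.comp_apply]
      exact_mod_cast Real.sqrt_nonneg _)
  have := hD.conjTranspose_mul_mul_same (star (h.1.eigenvectorUnitary : Matrix n n ℂ))
  rw [star_eq_conjTranspose, conjTranspose_conjTranspose] at this
  exact this

lemma Matrix.PosSemidef.sqrt_mul_self {A : Matrix n n ℂ} (h : A.PosSemidef) :
    h.sqrt * h.sqrt = A := by
  unfold Matrix.PosSemidef.sqrt
  have hU : star (h.1.eigenvectorUnitary : Matrix n n ℂ) * (h.1.eigenvectorUnitary : Matrix n n ℂ)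
      = 1 := Unitary.coe_star_mul_self _
  have hDD : diagonal ((↑) ∘ (√·) ∘ h.1.eigenvalues : n → ℂ) *
      diagonal ((↑) ∘ (√·) ∘ h.1.eigenvalues : n → ℂ)
      = diagonal (RCLike.ofReal ∘ h.1.eigenvalues) := by
    rw [diagonal_mul_diagonal]
    congr 1
    funext i
    simp only [Function.comp_apply]
    rw [← Complex.ofReal_mul, Real.mul_self_sqrt (h.eigenvalues_nonneg i)]
    rfl
  have hs := h.1.spectral_theorem
  simp only [Unitary.conjStarAlgAut_apply] at hs
  calc _ = (h.1.eigenvectorUnitary : Matrix n n ℂ) *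
        (diagonal ((↑) ∘ (√·) ∘ h.1.eigenvalues : n → ℂ) *
        (star (h.1.eigenvectorUnitary : Matrix n n ℂ) * (h.1.eigenvectorUnitary : Matrix n n ℂ)) *
        diagonal ((↑) ∘ (√·) ∘ h.1.eigenvalues : n → ℂ)) *
        star (h.1.eigenvectorUnitary : Matrix n n ℂ) := by simp only [mul_assoc]; rfl
    _ = A := by rw [hU, mul_one, hDD]; exact hs.symm

lemma msqrt_eq {A : Matrix n n ℂ} (h : A.PosSemidef) : msqrt A = h.sqrt := dif_pos h

lemma msqrt_posSemidef {A : Matrix n n ℂ} (h : A.PosSemidef) : (msqrt A).PosSemidef := by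
  rw [msqrt_eq h]; exact h.posSemidef_sqrt

lemma msqrt_mul_self {A : Matrix n n ℂ} (h : A.PosSemidef) : msqrt A * msqrt A = A := by
  rw [msqrt_eq h]; exact h.sqrt_mul_self

lemma msqrt_isUnit_det {A : Matrix n n ℂ} (h : A.PosDef) : IsUnit (msqrt A).det := by
  have h2 : (msqrt A).det * (msqrt A).det = A.det := by
    rw [← det_mul, msqrt_mul_self h.posSemidef]
  have hd : A.det ≠ 0 := h.det_pos.ne'
  refine isUnit_iff_ne_zero.mpr fun h0 => hd ?_
  rw [← h2, h0, mul_zero]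

lemma invsqrt_mul_msqrt {A : Matrix n n ℂ} (h : A.PosDef) : invsqrt A * msqrt A = 1 :=
  nonsing_inv_mul _ (msqrt_isUnit_det h)

lemma msqrt_mul_invsqrt {A : Matrix n n ℂ} (h : A.PosDef) : msqrt A * invsqrt A = 1 :=
  mul_nonsing_inv _ (msqrt_isUnit_det h)

lemma invsqrt_conj {A : Matrix n n ℂ} (h : A.PosDef) (X : Matrix n n ℂ) :
    invsqrt A * (msqrt A * X * msqrt A) * invsqrt A = X := by
  have h1 := invsqrt_mul_msqrt h
  have h2 := msqrt_mul_invsqrt h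
  calc invsqrt A * (msqrt A * X * msqrt A) * invsqrt A
      = (invsqrt A * msqrt A) * X * (msqrt A * invsqrt A) := by
        simp only [mul_assoc]
    _ = X := by rw [h1, h2, one_mul, mul_one]

lemma invsqrt_self_invsqrt {A : Matrix n n ℂ} (h : A.PosDef) :
    invsqrt A * A * invsqrt A = 1 := by
  have h3 := invsqrt_conj h 1
  rw [mul_one] at h3
  rw [msqrt_mul_self h.posSemidef] at h3
  exact h3

lemma star_of_nonneg {c : ℂ} (h : 0 ≤ c) : star c = c := by
  rw [Complex.nonneg_iff] at h
  exact Complex.ext (by simp) (by simp [← h.2])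

omit [DecidableEq n] in
lemma posSemidef_smul {A : Matrix n n ℂ} (hA : A.PosSemidef) {c : ℂ} (hc : 0 ≤ c) :
    (c • A).PosSemidef := by
  refine .of_dotProduct_mulVec_nonneg ?_ fun x => ?_
  · show (c • A)ᴴ = c • A
    rw [conjTranspose_smul, star_of_nonneg hc, hA.1.eq]
  · rw [smul_mulVec, dotProduct_smul, smul_eq_mul]
    exact mul_nonneg hc (hA.dotProduct_mulVec_nonneg x)

lemma posDef_smul_one {c : ℂ} (hc : 0 < c) : (c • (1 : Matrix n n ℂ)).PosDef := by
  refine .of_dotProduct_mulVec_pos ?_ fun x hx => ?_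
  · show (c • (1 : Matrix n n ℂ))ᴴ = c • 1
    rw [conjTranspose_smul, star_of_nonneg hc.le, conjTranspose_one]
  · rw [smul_mulVec, dotProduct_smul, smul_eq_mul, one_mulVec]
    exact mul_pos hc (Matrix.dotProduct_star_self_pos_iff.mpr hx)

lemma ptraceR_smul {S R : Type*} [Fintype R] (c : ℂ) (M : Matrix (S × R) (S × R) ℂ) :
    ptraceR (c • M) = c • ptraceR M := by
  ext s s'
  simp [ptraceR, Finset.mul_sum]

lemma trace_ptraceR {S R : Type*} [Fintype S] [Fintype R] (M : Matrix (S × R) (S × R) ℂ) :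
    (ptraceR M).trace = M.trace := by
  simp [Matrix.trace, Matrix.diag, ptraceR, Fintype.sum_prod_type]

lemma ptraceR_posSemidef {S R : Type*} [Fintype S] [DecidableEq S] [Fintype R] [DecidableEq R]
    {M : Matrix (S × R) (S × R) ℂ} (hM : M.PosSemidef) : (ptraceR M).PosSemidef := by
  classical
  have key : ptraceR M = ∑ r : R,
      (Matrix.of fun (p : S × R) (s : S) => if p = (s, r) then (1:ℂ) else 0)ᴴ * M *
      (Matrix.of fun (p : S × R) (s : S) => if p = (s, r) then (1:ℂ) else 0) := by
    ext s s'
    simp only [Matrix.sum_apply, Matrix.mul_apply, Matrix.conjTranspose_apply, Matrix.of_apply]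
    simp [ptraceR, Finset.sum_ite_eq', apply_ite, Finset.mul_sum, Finset.sum_mul]
  rw [key]
  exact Finset.sum_induction _ _ (fun a b ha hb => ha.add hb) Matrix.PosSemidef.zero
    (fun r _ => hM.conjTranspose_mul_mul_same _)

omit [DecidableEq n] in
lemma trace_submatrix_equiv {m : Type*} [Fintype m] (e : m ≃ n) (M : Matrix n n ℂ) :
    (M.submatrix e e).trace = M.trace :=
  Equiv.sum_comp e (fun i => M i i)

lemma stdBasis_conjTranspose (i j : n) :
    (single i j (1:ℂ))ᴴ = single j i 1 := by
  ext a b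
  simp only [conjTranspose_apply, single, of_apply, apply_ite (star : ℂ → ℂ),
    star_one, star_zero]
  exact if_congr and_comm rfl rfl

lemma trace_stdBasis_mul (i j : n) (Y : Matrix n n ℂ) :
    (single i j (1:ℂ) * Y).trace = Y j i := by
  simp only [Matrix.trace, Matrix.diag, Matrix.mul_apply, single, of_apply, ite_mul,
    one_mul, zero_mul]
  simp [ite_and, Finset.sum_ite_eq, Finset.sum_ite_eq']

lemma trace_stdBasis (i j : n) :
    (single i j (1:ℂ)).trace = if i = j then 1 else 0 := by
  by_cases h : i = j
  · subst h; simp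
  · simp [Matrix.trace_single_eq_of_ne _ _ _ h, h]

omit [DecidableEq n] in
lemma vec_outer_posSemidef (v : n → ℂ) :
    (Matrix.of fun p q => v p * star (v q)).PosSemidef := by
  refine .of_dotProduct_mulVec_nonneg ?_ fun x => ?_
  · show _ᴴ = _
    ext p q
    simp only [conjTranspose_apply, of_apply, star_mul', star_star]
    ring
  · have key : star x ⬝ᵥ ((Matrix.of fun p q => v p * star (v q)) *ᵥ x)
        = star (∑ q, star (v q) * x q) * (∑ q, star (v q) * x q) := by
      simp only [dotProduct, mulVec, of_apply, star_sum, star_mul', star_star, Pi.star_apply]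
      rw [Finset.sum_mul_sum]
      refine Finset.sum_congr rfl fun p _ => ?_
      rw [Finset.mul_sum]
      exact Finset.sum_congr rfl fun q _ => by ring
    rw [key]
    exact star_mul_self_nonneg _

lemma complex_natInv_nonneg (k : ℕ) : (0:ℂ) ≤ ((k:ℂ))⁻¹ := by
  have h1 : ((k:ℂ))⁻¹ = (((k:ℝ)⁻¹ : ℝ) : ℂ) := by push_cast; ring
  rw [h1]
  exact_mod_cast (by positivity : (0:ℝ) ≤ ((k:ℝ))⁻¹)

lemma complex_two_inv_nonneg : (0:ℂ) ≤ (2:ℂ)⁻¹ := by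
  have h1 : ((2:ℂ))⁻¹ = (((2:ℝ)⁻¹ : ℝ) : ℂ) := by push_cast; ring
  rw [h1]
  exact_mod_cast (by norm_num : (0:ℝ) ≤ (2:ℝ)⁻¹)

lemma complex_natInv_pos {k : ℕ} (hk : k ≠ 0) : (0:ℂ) < ((k:ℂ))⁻¹ := by
  have h1 : ((k:ℂ))⁻¹ = (((k:ℝ)⁻¹ : ℝ) : ℂ) := by push_cast; ring
  rw [h1]
  exact_mod_cast (by positivity : (0:ℝ) < ((k:ℝ))⁻¹)

lemma complex_half_natInv_pos {k : ℕ} (hk : k ≠ 0) : (0:ℂ) < (2:ℂ)⁻¹ * ((k:ℂ))⁻¹ := by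
  have h1 : (2:ℂ)⁻¹ * ((k:ℂ))⁻¹ = ((((2:ℝ)⁻¹ * ((k:ℝ))⁻¹ : ℝ)) : ℂ) := by push_cast; ring
  rw [h1]
  exact_mod_cast (by positivity : (0:ℝ) < (2:ℝ)⁻¹ * ((k:ℝ))⁻¹)

end AuxA

section AuxB

variable {S : Type*} [Fintype S] [DecidableEq S]

/-- depolarizing channel to `Fin n`. -/
noncomputable def chanDepol (S : Type*) [Fintype S] [DecidableEq S] (n : ℕ) :
    Matrix S S ℂ →ₗ[ℂ] Matrix (Fin n) (Fin n) ℂ where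
  toFun X := (X.trace * (n:ℂ)⁻¹) • 1
  map_add' X Y := by simp [add_mul, add_smul]
  map_smul' c X := by simp [smul_smul, mul_assoc]

/-- half-depolarizing channel through an equivalence `e : S ≃ Fin n`. -/
noncomputable def chanHalf {S : Type*} [Fintype S] [DecidableEq S] {n : ℕ} (e : S ≃ Fin n) :
    Matrix S S ℂ →ₗ[ℂ] Matrix (Fin n) (Fin n) ℂ where
  toFun X := (2:ℂ)⁻¹ • X.submatrix e.symm e.symm
    + (X.trace * ((2:ℂ)⁻¹ * (n:ℂ)⁻¹)) • 1
  map_add' X Y := by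
    ext a b
    simp only [Matrix.trace_add, Matrix.add_apply, Matrix.smul_apply, Matrix.submatrix_apply,
      Matrix.one_apply, smul_eq_mul]
    split_ifs <;> ring
  map_smul' c X := by
    ext a b
    simp only [Matrix.trace_smul, Matrix.smul_apply, Matrix.submatrix_apply, Matrix.add_apply,
      Matrix.one_apply, smul_eq_mul, RingHom.id_apply]
    split_ifs <;> ring

omit [Fintype S] in
lemma stdBasis_submatrix {n : ℕ} (e : S ≃ Fin n) (i j : S) :
    (single i j (1:ℂ)).submatrix e.symm e.symm = single (e i) (e j) 1 := by
  ext a b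
  simp only [Matrix.submatrix_apply, single, of_apply]
  exact if_congr (by rw [Equiv.eq_symm_apply, Equiv.eq_symm_apply]) rfl rfl

lemma chanDepol_apply (n : ℕ) (X : Matrix S S ℂ) :
    chanDepol S n X = (X.trace * (n:ℂ)⁻¹) • 1 := rfl

lemma chanHalf_apply {n : ℕ} (e : S ≃ Fin n) (X : Matrix S S ℂ) :
    chanHalf e X = (2:ℂ)⁻¹ • X.submatrix e.symm e.symm
      + (X.trace * ((2:ℂ)⁻¹ * (n:ℂ)⁻¹)) • 1 := rfl

lemma adjMap_chanDepol (n : ℕ) (Y : Matrix (Fin n) (Fin n) ℂ) :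
    adjMap (chanDepol S n) Y = (Y.trace * (n:ℂ)⁻¹) • (1 : Matrix S S ℂ) := by
  ext i j
  show (((((single i j (1:ℂ)).trace * (n:ℂ)⁻¹) • 1 : Matrix (Fin n) (Fin n) ℂ))ᴴ * Y).trace
      = ((Y.trace * (n:ℂ)⁻¹) • (1 : Matrix S S ℂ)) i j
  rw [conjTranspose_smul, conjTranspose_one, trace_stdBasis]
  simp only [Matrix.smul_mul, Matrix.one_mul, trace_smul, smul_eq_mul, Matrix.smul_apply,
    Matrix.one_apply]
  rw [star_mul', apply_ite (star : ℂ → ℂ)]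
  simp only [star_one, star_zero, star_inv₀, star_natCast]
  split_ifs <;> ring

lemma adjMap_chanHalf {n : ℕ} (e : S ≃ Fin n) (Y : Matrix (Fin n) (Fin n) ℂ) :
    adjMap (chanHalf e) Y
      = (2:ℂ)⁻¹ • Y.submatrix e e + (Y.trace * ((2:ℂ)⁻¹ * (n:ℂ)⁻¹)) • 1 := by
  ext i j
  show ((((2:ℂ)⁻¹ • (single i j (1:ℂ)).submatrix e.symm e.symm
      + ((single i j (1:ℂ)).trace * ((2:ℂ)⁻¹ * (n:ℂ)⁻¹)) • 1)ᴴ) * Y).trace = _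
  rw [stdBasis_submatrix, trace_stdBasis, conjTranspose_add, conjTranspose_smul,
    conjTranspose_smul, conjTranspose_one, stdBasis_conjTranspose, Matrix.add_mul,
    trace_add, Matrix.smul_mul, Matrix.smul_mul, Matrix.one_mul, trace_smul, trace_smul,
    trace_stdBasis_mul]
  simp only [Matrix.add_apply, Matrix.smul_apply, Matrix.submatrix_apply, Matrix.one_apply,
    smul_eq_mul]
  rw [star_mul', apply_ite (star : ℂ → ℂ)]
  simp only [star_one, star_zero, star_inv₀, star_natCast, star_mul', star_ofNat]
  split_ifs <;> ring

lemma choi_chanDepol (n : ℕ) :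
    choi (chanDepol S n) = (n:ℂ)⁻¹ • 1 := by
  ext p q
  show (((single p.1 q.1 (1:ℂ)).trace * (n:ℂ)⁻¹) • (1 : Matrix (Fin n) (Fin n) ℂ)) p.2 q.2
      = ((n:ℂ)⁻¹ • (1 : Matrix (S × Fin n) (S × Fin n) ℂ)) p q
  rw [trace_stdBasis]
  simp only [Matrix.smul_apply, Matrix.one_apply, smul_eq_mul, Prod.ext_iff]
  split_ifs <;> simp_all

lemma choi_chanHalf {n : ℕ} (e : S ≃ Fin n) :
    choi (chanHalf e) = (2:ℂ)⁻¹ • (Matrix.of fun p q : S × Fin n =>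
        (if e p.1 = p.2 then (1:ℂ) else 0) * star (if e q.1 = q.2 then (1:ℂ) else 0))
      + ((2:ℂ)⁻¹ * (n:ℂ)⁻¹) • 1 := by
  ext p q
  show ((2:ℂ)⁻¹ • (single p.1 q.1 (1:ℂ)).submatrix e.symm e.symm
      + ((single p.1 q.1 (1:ℂ)).trace * ((2:ℂ)⁻¹ * (n:ℂ)⁻¹)) • 1) p.2 q.2 = _
  rw [stdBasis_submatrix, trace_stdBasis]
  simp only [Matrix.add_apply, Matrix.smul_apply, Matrix.one_apply, Matrix.of_apply,
    single, smul_eq_mul, Prod.ext_iff, apply_ite (star : ℂ → ℂ), star_one, star_zero]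
  split_ifs <;> simp_all

lemma isCPTP_chanDepol (n : ℕ) (hn : (n:ℂ) ≠ 0) : IsCPTP (chanDepol S n) := by
  constructor
  · intro X
    rw [chanDepol_apply, trace_smul, trace_one, smul_eq_mul, Fintype.card_fin]
    field_simp
  · rw [choi_chanDepol]
    exact posSemidef_smul Matrix.PosSemidef.one (complex_natInv_nonneg n)

lemma isCPTP_chanHalf {n : ℕ} (e : S ≃ Fin n) (hn : (n:ℂ) ≠ 0) : IsCPTP (chanHalf e) := by
  constructor
  · intro X
    rw [chanHalf_apply, trace_add, trace_smul, trace_smul, trace_submatrix_equiv e.symm,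
      trace_one, Fintype.card_fin, smul_eq_mul, smul_eq_mul]
    field_simp
    ring
  · rw [choi_chanHalf]
    exact Matrix.PosSemidef.add
      (posSemidef_smul (vec_outer_posSemidef _) complex_two_inv_nonneg)
      (posSemidef_smul Matrix.PosSemidef.one
        (mul_nonneg complex_two_inv_nonneg (complex_natInv_nonneg n)))

end AuxB

/-- Two beliefs are equivalent iff
`Tr_{R₁}[√β (F⊗1) √β] = Tr_{R₂}[√γ (F⊗1) √γ]` for every matrix `F` on `S`. -/
theorem beliefs_equiv_iff_sqrt_sandwich
    {S R₁ R₂ : Type*} [Fintype S] [DecidableEq S]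
    [Fintype R₁] [DecidableEq R₁] [Fintype R₂] [DecidableEq R₂]
    (β : Matrix (S × R₁) (S × R₁) ℂ) (γ : Matrix (S × R₂) (S × R₂) ℂ)
    (hβ : IsDensity β) (hγ : IsDensity γ) :
    EquivBeliefs β γ ↔
      ∀ F : Matrix S S ℂ,
        ptraceR (msqrt β * (F ⊗ₖ (1 : Matrix R₁ R₁ ℂ)) * msqrt β) =
          ptraceR (msqrt γ * (F ⊗ₖ (1 : Matrix R₂ R₂ ℂ)) * msqrt γ) := by
  constructor
  · -- forward direction
    intro hE F
    rcases isEmpty_or_nonempty S with hS | hS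
    · ext i j
      exact (IsEmpty.false i).elim
    have hcard : Fintype.card S ≠ 0 := Fintype.card_ne_zero
    have hn : ((Fintype.card S : ℕ) : ℂ) ≠ 0 := Nat.cast_ne_zero.mpr hcard
    set n := Fintype.card S with hn_def
    let e : S ≃ Fin n := Fintype.equivFin S
    have hβtr : (ptraceR β).trace = 1 := by rw [trace_ptraceR, hβ.2]
    have hγtr : (ptraceR γ).trace = 1 := by rw [trace_ptraceR, hγ.2]
    -- Step 1: equal marginals via the depolarizing channel
    have hE0β : chanDepol S n (ptraceR β) = (n:ℂ)⁻¹ • 1 := by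
      rw [chanDepol_apply, hβtr, one_mul]
    have hE0γ : chanDepol S n (ptraceR γ) = (n:ℂ)⁻¹ • 1 := by
      rw [chanDepol_apply, hγtr, one_mul]
    have hpd0 : (((n:ℂ))⁻¹ • (1 : Matrix (Fin n) (Fin n) ℂ)).PosDef :=
      posDef_smul_one (complex_natInv_pos hcard)
    have hmarg : ptraceR β = ptraceR γ := by
      have key := hE (Fin n) inferInstance inferInstance (chanDepol S n)
        (isCPTP_chanDepol n hn) (by rw [hE0β]; exact hpd0) (by rw [hE0γ]; exact hpd0)
        ((n:ℂ)⁻¹ • 1)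
      simp only [retroExt, petzExt] at key
      rw [hE0β, hE0γ, invsqrt_self_invsqrt hpd0, adjMap_chanDepol, trace_one,
        Fintype.card_fin, mul_inv_cancel₀ hn, one_smul, Matrix.one_kronecker_one,
        Matrix.one_kronecker_one, mul_one, mul_one, msqrt_mul_self hβ.1,
        msqrt_mul_self hγ.1] at key
      exact key
    -- Step 2: the half-depolarizing channel realizes an arbitrary `F`
    have hρpsd : (ptraceR β).PosSemidef := ptraceR_posSemidef hβ.1
    have hMpd : (chanHalf e (ptraceR β)).PosDef := by
      rw [chanHalf_apply, hβtr, one_mul]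
      exact Matrix.PosDef.posSemidef_add
        (posSemidef_smul (hρpsd.submatrix _) complex_two_inv_nonneg)
        (posDef_smul_one (complex_half_natInv_pos hcard))
    have hAdjX : adjMap (chanHalf e)
        (((2:ℂ) • F - (F.trace * (n:ℂ)⁻¹) • 1).submatrix e.symm e.symm) = F := by
      rw [adjMap_chanHalf]
      have h1 : (((2:ℂ) • F - (F.trace * (n:ℂ)⁻¹) • 1).submatrix e.symm e.symm).submatrix e e
          = (2:ℂ) • F - (F.trace * (n:ℂ)⁻¹) • 1 := by
        rw [Matrix.submatrix_submatrix]
        simp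
      have h2 : (((2:ℂ) • F - (F.trace * (n:ℂ)⁻¹) • 1).submatrix e.symm e.symm).trace
          = F.trace := by
        rw [trace_submatrix_equiv e.symm, trace_sub, trace_smul, trace_smul, trace_one,
          smul_eq_mul, smul_eq_mul, ← hn_def]
        field_simp
        ring
      rw [h1, h2, smul_sub, smul_smul, smul_smul]
      rw [show ((2:ℂ)⁻¹ * 2) = 1 by norm_num, one_smul,
        show ((2:ℂ)⁻¹ * (F.trace * (n:ℂ)⁻¹)) = F.trace * ((2:ℂ)⁻¹ * (n:ℂ)⁻¹) by ring]
      exact sub_add_cancel _ _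
    have hAdj : adjMap (chanHalf e)
        (invsqrt (chanHalf e (ptraceR β)) *
          (msqrt (chanHalf e (ptraceR β)) *
            (((2:ℂ) • F - (F.trace * (n:ℂ)⁻¹) • 1).submatrix e.symm e.symm) *
            msqrt (chanHalf e (ptraceR β))) *
          invsqrt (chanHalf e (ptraceR β))) = F := by
      rw [invsqrt_conj hMpd, hAdjX]
    have key := hE (Fin n) inferInstance inferInstance (chanHalf e)
      (isCPTP_chanHalf e hn) hMpd (by rw [← hmarg]; exact hMpd)
      (msqrt (chanHalf e (ptraceR β)) *
        (((2:ℂ) • F - (F.trace * (n:ℂ)⁻¹) • 1).submatrix e.symm e.symm) *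
        msqrt (chanHalf e (ptraceR β)))
    simp only [retroExt, petzExt] at key
    rw [← hmarg] at key
    rw [hAdj] at key
    exact key
  · -- reverse direction
    intro h T iT dT E hCPTP hβp hγp σ
    have hmarg : ptraceR β = ptraceR γ := by
      have h1 := h 1
      rw [Matrix.one_kronecker_one, Matrix.one_kronecker_one, mul_one, mul_one,
        msqrt_mul_self hβ.1, msqrt_mul_self hγ.1] at h1
      exact h1
    show ptraceR (petzExt E β σ) = ptraceR (petzExt E γ σ)
    unfold petzExt
    rw [hmarg]
    exact h _
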